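/- For any real λ > 4, the symmetric 3×3 real matrix with rows ((12λ−45)λ(λ−4), −12λ(λ−4), 0), (−12λ(λ−4), 2λ²+(25/2)λ, 20λ), (0, 20λ, 20λ+245) is positive definite, and for λ = 0 it is positive semidefinite. -/

import Mathlib

lemma quadpos_aux (a B D u v w : ℝ) (ha : 0 < a) (hB : 0 < B) (hD : 0 < D)
    (h : u ≠ 0 ∨ v ≠ 0 ∨ w ≠ 0) : 0 < B*u^2 + v^2 + a*D*w^2 := by
  have h1 : 0 ≤ B*u^2 := by positivity
  have h2 : 0 ≤ v^2 := sq_nonneg v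
  have h3 : 0 ≤ a*D*w^2 := by positivity
  rcases h with h | h | h
  · have : 0 < B*u^2 := by positivity
    linarith
  · have : 0 < v^2 := by positivity
    linarith
  · have : 0 < a*D*w^2 := by positivity
    linarith

theorem stmt_12 :
    (∀ l : ℝ, 4 < l →
      (!![(12*l-45)*l*(l-4), -12*l*(l-4), 0;
         -12*l*(l-4), 2*l^2+(25/2)*l, 20*l;
         0, 20*l, 20*l+245] : Matrix (Fin 3) (Fin 3) ℝ).PosDef) ∧
    (!![(12*(0:ℝ)-45)*0*(0-4), -12*0*(0-4), 0;
       -12*0*(0-4), 2*0^2+(25/2)*0, 20*0;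
       0, 20*0, 20*0+245] : Matrix (Fin 3) (Fin 3) ℝ).PosSemidef := by
  constructor
  · intro l hl
    have hl0 : 0 < l := by linarith
    have hl4 : 0 < l - 4 := by linarith
    rw [Matrix.posDef_iff_dotProduct_mulVec]
    constructor
    · ext i j
      fin_cases i <;> fin_cases j <;> simp [Matrix.conjTranspose_apply]
    · intro x hx
      have hx' : x 0 ≠ 0 ∨ x 1 ≠ 0 ∨ x 2 ≠ 0 := by
        by_contra h
        push_neg at h
        obtain ⟨h0, h1, h2⟩ := h
        apply hx
        funext i
        fin_cases i <;> assumption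
      obtain ⟨X, hX⟩ : ∃ X, x 0 = X := ⟨x 0, rfl⟩
      obtain ⟨Y, hY⟩ : ∃ Y, x 1 = Y := ⟨x 1, rfl⟩
      obtain ⟨Z, hZ⟩ : ∃ Z, x 2 = Z := ⟨x 2, rfl⟩
      rw [hX, hY, hZ] at hx'
      have hexp : dotProduct (star x)
          (Matrix.mulVec (!![(12*l-45)*l*(l-4), -12*l*(l-4), 0;
             -12*l*(l-4), 2*l^2+(25/2)*l, 20*l;
             0, 20*l, 20*l+245] : Matrix (Fin 3) (Fin 3) ℝ) x) =
          ((12*l-45)*l*(l-4))*X^2 + 2*(-12*l*(l-4))*X*Y + (2*l^2+(25/2)*l)*Y^2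
            + 2*(20*l)*Y*Z + (20*l+245)*Z^2 := by
        simp [dotProduct, Matrix.mulVec, Fin.sum_univ_three, Matrix.vecHead,
          Matrix.vecTail, hX, hY, hZ]
        ring
      rw [hexp]
      clear hexp hx hX hY hZ
      -- abbreviations
      have ha : 0 < (12*l-45)*l*(l-4) := by
        have : 0 < 12*l-45 := by linarith
        positivity
      have hBfac : ((12*l-45)*l*(l-4))*(2*l^2+(25/2)*l) - (-12*l*(l-4))^2
          = l^2*(l-4)*(24*l^2-84*l+27/2) := by ring
      have hB : 0 < ((12*l-45)*l*(l-4))*(2*l^2+(25/2)*l) - (-12*l*(l-4))^2 := by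
        rw [hBfac]
        have h1 : 0 < 24*l^2-84*l+27/2 := by nlinarith [sq_nonneg (l-4)]
        positivity
      have hDfac : (((12*l-45)*l*(l-4))*(2*l^2+(25/2)*l) - (-12*l*(l-4))^2)*(20*l+245)
            - ((12*l-45)*l*(l-4))*(20*l)^2
          = l^2*(l-4)*(480*l^3-600*l^2-2310*l+6615/2) := by ring
      have hD : 0 < (((12*l-45)*l*(l-4))*(2*l^2+(25/2)*l) - (-12*l*(l-4))^2)*(20*l+245)
            - ((12*l-45)*l*(l-4))*(20*l)^2 := by
        rw [hDfac]
        have h1 : 0 < 480*l^3-600*l^2-2310*l+6615/2 := by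
          nlinarith [mul_pos (mul_pos hl4 hl4) hl4, mul_pos hl4 hl4, mul_pos hl0 hl4,
            mul_pos (mul_pos hl0 hl0) hl4]
        positivity
      set a : ℝ := (12*l-45)*l*(l-4) with ha_def
      set d : ℝ := -12*l*(l-4) with hd_def
      set b : ℝ := 2*l^2+(25/2)*l with hb_def
      set e : ℝ := 20*l with he_def
      set c : ℝ := 20*l+245 with hc_def
      set B : ℝ := a*b - d^2 with hB_def
      set D : ℝ := B*c - a*e^2 with hD_def
      -- nonvanishing of the square roots
      have huvw : a*X+d*Y ≠ 0 ∨ B*Y+a*e*Z ≠ 0 ∨ Z ≠ 0 := by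
        by_contra h
        push_neg at h
        obtain ⟨h1, h2, h3⟩ := h
        rw [h3] at h2
        have hY0 : Y = 0 := by
          have h2' : B*Y = 0 := by linarith
          rcases mul_eq_zero.mp h2' with h | h
          · exact absurd h hB.ne'
          · exact h
        rw [hY0] at h1
        have hX0 : X = 0 := by
          have h1' : a*X = 0 := by linarith
          rcases mul_eq_zero.mp h1' with h | h
          · exact absurd h ha.ne'
          · exact h
        rcases hx' with h | h | h
        · exact h hX0
        · exact h hY0
        · exact h h3
      have key : (a*B) * (a*X^2 + 2*d*X*Y + b*Y^2 + 2*e*Y*Z + c*Z^2)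
          = B*(a*X+d*Y)^2 + (B*Y+a*e*Z)^2 + a*D*Z^2 := by
        rw [hD_def, hB_def]; ring
      have hpos := quadpos_aux a B D (a*X+d*Y) (B*Y+a*e*Z) Z ha hB hD huvw
      have habQ : 0 < (a*B) * (a*X^2 + 2*d*X*Y + b*Y^2 + 2*e*Y*Z + c*Z^2) := by
        rw [key]; exact hpos
      have hab : 0 < a*B := mul_pos ha hB
      exact pos_of_mul_pos_right habQ hab.le
  · rw [Matrix.posSemidef_iff_dotProduct_mulVec]
    constructor
    · ext i j
      fin_cases i <;> fin_cases j <;>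
        simp [Matrix.conjTranspose_apply, Matrix.vecHead, Matrix.vecTail]
    · intro x
      have hexp : dotProduct (star x)
          (Matrix.mulVec (!![(12*(0:ℝ)-45)*0*(0-4), -12*0*(0-4), 0;
             -12*0*(0-4), 2*0^2+(25/2)*0, 20*0;
             0, 20*0, 20*0+245] : Matrix (Fin 3) (Fin 3) ℝ) x) = 245*(x 2)^2 := by
        simp [dotProduct, Matrix.mulVec, Fin.sum_univ_three, Matrix.vecHead,
          Matrix.vecTail]
        ring
      rw [hexp]
      positivity
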